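/- Let G be a finite graph, u, v ∈ V(G), and T ⊆ V(G) with |T| ≤ 1. Then in model E₂^{p,T} on the bunkbed graph, P(u₀ ↔ v₀) ≥ P(u₀ ↔ v₁) for every probability vector p = (p_e)_{e ∈ E(G)}. -/

import Mathlib

open scoped Classical

noncomputable section

/-- Indicator of a proposition, as a real number. -/
def pInd (P : Prop) : ℝ := if P then 1 else 0

variable {V : Type}

/-- The bunkbed presence graph: `σ e b` tells whether the copy of edge `e` in layer `b`
is present; vertical edges are present exactly at vertices of `T`. -/
def bbGraph (G : SimpleGraph V) (σ : Sym2 V → Bool → Bool) (T : Set V) :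
    SimpleGraph (V × Bool) where
  Adj a b := (a.2 = b.2 ∧ G.Adj a.1 b.1 ∧ σ s(a.1, b.1) a.2 = true) ∨
    (a.1 = b.1 ∧ a.2 ≠ b.2 ∧ a.1 ∈ T)
  symm := by
    refine ⟨?_⟩
    intro a b h
    rcases h with ⟨h1, h2, h3⟩ | ⟨h1, h2, h3⟩
    · exact Or.inl ⟨h1.symm, h2.symm, by rwa [Sym2.eq_swap, ← h1]⟩
    · exact Or.inr ⟨h1.symm, Ne.symm h2, h1 ▸ h3⟩
  loopless := by
    refine ⟨?_⟩
    rintro a (⟨h1, h2, h3⟩ | ⟨h1, h2, h3⟩)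
    · exact G.irrefl h2
    · exact h2 rfl

/-- Weight of a horizontal configuration in model E₂: each copy of an edge `e` of `G`
is present with probability `p e`, independently (non-edges carry weight 1/2 each so
that the total mass is 1). -/
def wE2 [Fintype V] [DecidableEq V] (G : SimpleGraph V) (p : Sym2 V → ℝ)
    (σ : Sym2 V → Bool → Bool) : ℝ :=
  ∏ e : Sym2 V, ∏ b : Bool,
    if e ∈ G.edgeSet then (if σ e b then p e else 1 - p e) else 1 / 2

/-- Connection probability in model E₂^{p,T}. -/
def PE2 [Fintype V] [DecidableEq V] (G : SimpleGraph V) (p : Sym2 V → ℝ) (T : Set V)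
    (x y : V × Bool) : ℝ :=
  ∑ σ : Sym2 V → Bool → Bool, wE2 G p σ * pInd ((bbGraph G σ T).Reachable x y)

/-- Connection probability in model E₁^p: every edge of the bunkbed graph (horizontal
and vertical) present independently with probability `p`. -/
def PE1 [Fintype V] [DecidableEq V] (G : SimpleGraph V) (p : ℝ) (x y : V × Bool) : ℝ :=
  ∑ σ : Sym2 V → Bool → Bool, ∑ η : V → Bool,
    wE2 G (fun _ => p) σ * (∏ v : V, if η v then p else 1 - p) *
      pInd ((bbGraph G σ {v | η v = true}).Reachable x y)

/-! ### Auxiliary definitions and lemmas -/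

lemma pInd_nonneg (P : Prop) : 0 ≤ pInd P := by
  unfold pInd; split <;> norm_num

lemma pInd_mono {P Q : Prop} (h : P → Q) : pInd P ≤ pInd Q := by
  unfold pInd; split
  · rename_i hP; rw [if_pos (h hP)]
  · split <;> norm_num

lemma pInd_congr {P Q : Prop} (h : P ↔ Q) : pInd P = pInd Q := by
  unfold pInd; rw [propext h]

lemma pInd_and (P Q : Prop) : pInd (P ∧ Q) = pInd P * pInd Q := by
  unfold pInd
  by_cases hP : P <;> by_cases hQ : Q <;> simp [hP, hQ]

lemma pInd_false {P : Prop} (h : ¬ P) : pInd P = 0 := by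
  unfold pInd; rw [if_neg h]

lemma bool_factor (f : Bool → ℝ) (x y : Bool) : f (x ⊓ y) * f (x ⊔ y) = f x * f y := by
  cases x <;> cases y <;> simp [mul_comm]

/-- Single-layer graph determined by a configuration `τ`. -/
def lGraph (G : SimpleGraph V) (τ : Sym2 V → Bool) : SimpleGraph V where
  Adj a b := G.Adj a b ∧ τ s(a, b) = true
  symm := ⟨fun a b ⟨h1, h2⟩ => ⟨h1.symm, by rwa [Sym2.eq_swap]⟩⟩
  loopless := ⟨fun a h => G.irrefl h.1⟩

/-- Single-layer weight. -/
def w1 [Fintype V] [DecidableEq V] (G : SimpleGraph V) (p : Sym2 V → ℝ)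
    (τ : Sym2 V → Bool) : ℝ :=
  ∏ e : Sym2 V, if e ∈ G.edgeSet then (if τ e then p e else 1 - p e) else 1 / 2

lemma w1_nonneg [Fintype V] [DecidableEq V] (G : SimpleGraph V) (p : Sym2 V → ℝ)
    (hp : ∀ e, 0 ≤ p e ∧ p e ≤ 1) (τ : Sym2 V → Bool) : 0 ≤ w1 G p τ := by
  refine Finset.prod_nonneg fun e _ => ?_
  split
  · split
    · exact (hp e).1
    · linarith [(hp e).2]
  · norm_num

lemma w1_sum [Fintype V] [DecidableEq V] (G : SimpleGraph V) (p : Sym2 V → ℝ) :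
    ∑ τ : Sym2 V → Bool, w1 G p τ = 1 := by
  unfold w1
  rw [← Fintype.prod_sum (fun e (b : Bool) => if e ∈ G.edgeSet then (if b then p e else 1 - p e) else 1 / 2)]
  refine Finset.prod_eq_one fun e _ => ?_
  rw [Fintype.sum_bool]
  split <;> norm_num

lemma wE2_nonneg [Fintype V] [DecidableEq V] (G : SimpleGraph V) (p : Sym2 V → ℝ)
    (hp : ∀ e, 0 ≤ p e ∧ p e ≤ 1) (σ : Sym2 V → Bool → Bool) : 0 ≤ wE2 G p σ := by
  refine Finset.prod_nonneg fun e _ => Finset.prod_nonneg fun b _ => ?_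
  split
  · split
    · exact (hp e).1
    · linarith [(hp e).2]
  · norm_num

/-- Pairing equivalence between pairs of layer configurations and bunkbed configurations. -/
def pairEquiv : ((Sym2 V → Bool) × (Sym2 V → Bool)) ≃ (Sym2 V → Bool → Bool) where
  toFun q := fun e b => b.rec (q.1 e) (q.2 e)
  invFun σ := (fun e => σ e false, fun e => σ e true)
  left_inv q := rfl
  right_inv σ := by funext e b; cases b <;> rfl

lemma wE2_pairEquiv [Fintype V] [DecidableEq V] (G : SimpleGraph V) (p : Sym2 V → ℝ)
    (q : (Sym2 V → Bool) × (Sym2 V → Bool)) :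
    wE2 G p (pairEquiv q) = w1 G p q.1 * w1 G p q.2 := by
  unfold wE2 w1
  rw [← Finset.prod_mul_distrib]
  refine Finset.prod_congr rfl fun e _ => ?_
  rw [Fintype.prod_bool, mul_comm]
  rfl

/-- Horizontal embedding of a layer into the bunkbed graph. -/
lemma reach_of_layer {G : SimpleGraph V} {σ : Sym2 V → Bool → Bool} {T : Set V}
    {a c : V} (i : Bool) (h : (lGraph G (fun e => σ e i)).Reachable a c) :
    (bbGraph G σ T).Reachable (a, i) (c, i) := by
  exact h.map ⟨fun a => (a, i), fun hadj => Or.inl ⟨rfl, hadj.1, hadj.2⟩⟩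

/-- Characterization of reachability in the bunkbed graph with a single vertical column. -/
lemma bb_reach_char {G : SimpleGraph V} {σ : Sym2 V → Bool → Bool} {x : V}
    {P Q : V × Bool} (h : (bbGraph G σ {x}).Reachable P Q) :
    (P.2 = Q.2 ∧ (lGraph G (fun e => σ e P.2)).Reachable P.1 Q.1) ∨
      ((lGraph G (fun e => σ e P.2)).Reachable P.1 x ∧
        (lGraph G (fun e => σ e Q.2)).Reachable x Q.1) := by
  obtain ⟨w⟩ := h
  induction w with
  | nil => exact Or.inl ⟨rfl, SimpleGraph.Reachable.refl _⟩
  | @cons P R Q h w ih =>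
    rcases h with ⟨h1, h2, h3⟩ | ⟨h1, h2, h3⟩
    · have hadj : (lGraph G (fun e => σ e P.2)).Adj P.1 R.1 := ⟨h2, h3⟩
      rw [← h1] at ih
      rcases ih with ⟨hQ, hr⟩ | ⟨hr1, hr2⟩
      · exact Or.inl ⟨hQ, hadj.reachable.trans hr⟩
      · exact Or.inr ⟨hadj.reachable.trans hr1, hr2⟩
    · have hx : P.1 = x := h3
      have hPx : (lGraph G (fun e => σ e P.2)).Reachable P.1 x := by
        rw [hx]
      rw [← h1, hx] at ih
      rcases ih with ⟨hQ, hr⟩ | ⟨hr1, hr2⟩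
      · rw [← hQ]
        exact Or.inr ⟨hPx, hr⟩
      · exact Or.inr ⟨hPx, hr2⟩

lemma bb_same {G : SimpleGraph V} {σ : Sym2 V → Bool → Bool} {x : V} (u v : V) (i : Bool) :
    (bbGraph G σ {x}).Reachable (u, i) (v, i) ↔
      (lGraph G (fun e => σ e i)).Reachable u v := by
  constructor
  · intro h
    rcases bb_reach_char h with ⟨_, hr⟩ | ⟨h1, h2⟩
    · exact hr
    · exact h1.trans h2
  · exact reach_of_layer i

lemma bb_cross {G : SimpleGraph V} {σ : Sym2 V → Bool → Bool} {x : V} (u v : V) :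
    (bbGraph G σ {x}).Reachable (u, false) (v, true) ↔
      (lGraph G (fun e => σ e false)).Reachable u x ∧
        (lGraph G (fun e => σ e true)).Reachable x v := by
  constructor
  · intro h
    rcases bb_reach_char h with ⟨hQ, _⟩ | hh
    · exact absurd hQ (by simp)
    · exact hh
  · rintro ⟨h1, h2⟩
    have hv : (bbGraph G σ {x}).Adj (x, false) (x, true) :=
      Or.inr ⟨rfl, by simp, rfl⟩
    exact (reach_of_layer false h1).trans (hv.reachable.trans (reach_of_layer true h2))

lemma lGraph_mono {G : SimpleGraph V} {τ τ' : Sym2 V → Bool} (h : τ ≤ τ') :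
    lGraph G τ ≤ lGraph G τ' := by
  intro a b hab
  refine ⟨hab.1, ?_⟩
  have := h s(a, b)
  rw [hab.2] at this
  exact top_le_iff.mp this

theorem layersum_bound [Fintype V] [DecidableEq V] (G : SimpleGraph V) (u v x : V)
    (p : Sym2 V → ℝ) (hp : ∀ e, 0 ≤ p e ∧ p e ≤ 1) :
    (∑ τ : Sym2 V → Bool, w1 G p τ * pInd ((lGraph G τ).Reachable u x)) *
      (∑ τ : Sym2 V → Bool, w1 G p τ * pInd ((lGraph G τ).Reachable x v)) ≤
    ∑ τ : Sym2 V → Bool, w1 G p τ * pInd ((lGraph G τ).Reachable u v) := by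
  have hfkg := fkg (μ := w1 G p) (f := fun τ => pInd ((lGraph G τ).Reachable u x))
    (g := fun τ => pInd ((lGraph G τ).Reachable x v))
    (fun τ => w1_nonneg G p hp τ) (fun τ => pInd_nonneg _) (fun τ => pInd_nonneg _)
    (fun τ τ' h => pInd_mono fun hr => hr.mono (lGraph_mono h))
    (fun τ τ' h => pInd_mono fun hr => hr.mono (lGraph_mono h))
    (fun a b => by
      unfold w1
      rw [← Finset.prod_mul_distrib, ← Finset.prod_mul_distrib]
      refine le_of_eq (Finset.prod_congr rfl fun e _ => ?_)
      simp only [Pi.inf_apply, Pi.sup_apply]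
      exact (bool_factor (fun b => if e ∈ G.edgeSet then (if b then p e else 1 - p e) else 1 / 2)
        (a e) (b e)).symm)
  rw [w1_sum, one_mul] at hfkg
  refine hfkg.trans (Finset.sum_le_sum fun τ _ => ?_)
  refine mul_le_mul_of_nonneg_left ?_ (w1_nonneg G p hp τ)
  rw [← pInd_and]
  exact pInd_mono fun ⟨h1, h2⟩ => h1.trans h2

/-- If `T` has at most one element, the bunkbed inequality holds in model E₂^{p,T}
for every probability vector `p`. -/
theorem bunkbed_E2_of_small_T [Fintype V] [DecidableEq V] (G : SimpleGraph V)
    (hconn : G.Connected) (u v : V) (T : Set V) (hT : T.Subsingleton)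
    (p : Sym2 V → ℝ) (hp : ∀ e, 0 ≤ p e ∧ p e ≤ 1) :
    PE2 G p T (u, false) (v, false) ≥ PE2 G p T (u, false) (v, true) := by
  rcases hT.eq_empty_or_singleton with rfl | ⟨x, rfl⟩
  · -- empty T : right side is zero
    have hlayer : ∀ σ : Sym2 V → Bool → Bool, ∀ P Q : V × Bool,
        (bbGraph G σ (∅ : Set V)).Reachable P Q → P.2 = Q.2 := by
      intro σ P Q h
      obtain ⟨w⟩ := h
      induction w with
      | nil => rfl
      | cons h w ih =>
        rcases h with ⟨h1, _, _⟩ | ⟨_, _, h3⟩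
        · exact h1.trans ih
        · exact absurd h3 (Set.notMem_empty _)
    have hzero : PE2 G p (∅ : Set V) (u, false) (v, true) = 0 := by
      refine Finset.sum_eq_zero fun σ _ => ?_
      rw [pInd_false (fun h => by simpa using hlayer σ _ _ h), mul_zero]
    rw [hzero]
    exact Finset.sum_nonneg fun σ _ =>
      mul_nonneg (wE2_nonneg G p hp σ) (pInd_nonneg _)
  · -- T = {x}
    have hL : PE2 G p {x} (u, false) (v, false) =
        ∑ τ : Sym2 V → Bool, w1 G p τ * pInd ((lGraph G τ).Reachable u v) := by
      unfold PE2
      rw [← Equiv.sum_comp (pairEquiv (V := V))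
        (fun σ => wE2 G p σ * pInd ((bbGraph G σ {x}).Reachable (u, false) (v, false)))]
      rw [Fintype.sum_prod_type]
      have : ∀ τ₀ τ₁ : Sym2 V → Bool,
          wE2 G p (pairEquiv (τ₀, τ₁)) *
            pInd ((bbGraph G (pairEquiv (τ₀, τ₁)) {x}).Reachable (u, false) (v, false)) =
          (w1 G p τ₀ * pInd ((lGraph G τ₀).Reachable u v)) * w1 G p τ₁ := by
        intro τ₀ τ₁
        rw [wE2_pairEquiv, pInd_congr (bb_same u v false)]
        have : lGraph G (fun e => pairEquiv (τ₀, τ₁) e false) = lGraph G τ₀ := rfl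
        rw [this]; ring
      simp only [this]
      rw [← Finset.sum_mul_sum, w1_sum, mul_one]
    have hR : PE2 G p {x} (u, false) (v, true) =
        (∑ τ : Sym2 V → Bool, w1 G p τ * pInd ((lGraph G τ).Reachable u x)) *
          (∑ τ : Sym2 V → Bool, w1 G p τ * pInd ((lGraph G τ).Reachable x v)) := by
      unfold PE2
      rw [← Equiv.sum_comp (pairEquiv (V := V))
        (fun σ => wE2 G p σ * pInd ((bbGraph G σ {x}).Reachable (u, false) (v, true)))]
      rw [Fintype.sum_prod_type]
      have : ∀ τ₀ τ₁ : Sym2 V → Bool,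
          wE2 G p (pairEquiv (τ₀, τ₁)) *
            pInd ((bbGraph G (pairEquiv (τ₀, τ₁)) {x}).Reachable (u, false) (v, true)) =
          (w1 G p τ₀ * pInd ((lGraph G τ₀).Reachable u x)) *
            (w1 G p τ₁ * pInd ((lGraph G τ₁).Reachable x v)) := by
        intro τ₀ τ₁
        rw [wE2_pairEquiv, pInd_congr (bb_cross u v), pInd_and]
        have h0 : lGraph G (fun e => pairEquiv (τ₀, τ₁) e false) = lGraph G τ₀ := rfl
        have h1 : lGraph G (fun e => pairEquiv (τ₀, τ₁) e true) = lGraph G τ₁ := rfl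
        rw [h0, h1]; ring
      simp only [this]
      rw [← Finset.sum_mul_sum]
    rw [hL, hR]
    exact layersum_bound G u v x p hp

end
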